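/- arXiv:2006.14383 — 2 statements merged into one kernel-verified Lean document; each statement's English description precedes it below -/
import Mathlib

section
/- Let 0 < α < 1 and f ∈ L¹(0,1). If the Abel integral equation (I^α φ)(x) = f(x) has a solution φ ∈ L¹(0,1), then I^(1-α) f is absolutely continuous on [0,1] and (I^(1-α) f)(0) = 0; conversely, under these conditions, the unique solution in L¹(0,1) is φ(x) = d/dx (I^(1-α) f)(x). -/
open MeasureTheory Real Set Filter

open Classical in
/-- Riemann-Liouville fractional integral of order `α` (identity for `α = 0`). -/
noncomputable def RL (α : ℝ) (f : ℝ → ℝ) : ℝ → ℝ :=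
  if α = 0 then f
  else fun x => (1 / Real.Gamma α) * ∫ t in (0:ℝ)..x, (x - t) ^ (α - 1) * f t

/-- `f ∈ L¹(0,1)`. -/
def L1 (f : ℝ → ℝ) : Prop := MeasureTheory.IntegrableOn f (Set.Ioc 0 1)

/-- `g` is absolutely continuous on `[0,1]` with value `c` at `0`:
`g x = c + ∫₀ˣ ψ` for some `ψ ∈ L¹(0,1)`. -/
def ACval (g : ℝ → ℝ) (c : ℝ) : Prop :=
  ∃ ψ : ℝ → ℝ, MeasureTheory.IntegrableOn ψ (Set.Ioc 0 1) ∧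
    ∀ x ∈ Set.Ioc (0:ℝ) 1, g x = c + ∫ t in (0:ℝ)..x, ψ t

/-- `g ∈ AC([0,1])`. -/
def IsAC (g : ℝ → ℝ) : Prop := ∃ c : ℝ, ACval g c

namespace AbelAux

open intervalIntegral Metric Topology


lemma integral_rpow_shift {e : ℝ} (he : -1 < e) (t c : ℝ) :
    ∫ s in t..c, (s - t) ^ e = (c - t) ^ (e + 1) / (e + 1) := by
  have h0 : e + 1 ≠ 0 := by linarith
  have := intervalIntegral.integral_comp_sub_right (a := t) (b := c) (fun u => u ^ e) t
  rw [this, sub_self, integral_rpow (Or.inl he)]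
  rw [Real.zero_rpow h0, sub_zero]

lemma real_beta {a : ℝ} (ha : 0 < a) (ha1 : a < 1) :
    ∫ v in (0:ℝ)..1, v ^ (a - 1) * (1 - v) ^ (-a) = Real.Gamma a * Real.Gamma (1 - a) := by
  have hb : (0:ℝ) < 1 - a := by linarith
  have h2 := Complex.Gamma_mul_Gamma_eq_betaIntegral (s := (a:ℂ)) (t := ((1 - a : ℝ) : ℂ))
    (by simpa using ha) (by simpa using hb)
  have hsum : (a:ℂ) + ((1 - a : ℝ) : ℂ) = 1 := by push_cast; ring
  rw [hsum, Complex.Gamma_one, one_mul] at h2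
  have h1 : Complex.betaIntegral (a:ℂ) ((1 - a : ℝ) : ℂ)
      = ((∫ v in (0:ℝ)..1, v ^ (a - 1) * (1 - v) ^ (-a) : ℝ) : ℂ) := by
    rw [Complex.betaIntegral, ← intervalIntegral.integral_ofReal]
    refine intervalIntegral.integral_congr fun v hv => ?_
    rw [uIcc_of_le zero_le_one] at hv
    have h1v : (0:ℝ) ≤ 1 - v := by linarith [hv.2]
    rw [show ((a:ℂ) - 1) = ((a - 1 : ℝ) : ℂ) by push_cast; ring,
      show (((1 - a : ℝ):ℂ) - 1) = ((-a : ℝ) : ℂ) by push_cast; ring,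
      show (1 - (v:ℂ)) = ((1 - v : ℝ) : ℂ) by push_cast; ring,
      ← Complex.ofReal_cpow hv.1, ← Complex.ofReal_cpow h1v]
    push_cast
    ring
  rw [h1, Complex.Gamma_ofReal, Complex.Gamma_ofReal, ← Complex.ofReal_mul] at h2
  exact (Complex.ofReal_inj.mp h2).symm

lemma beta_conv {a t x : ℝ} (ha : 0 < a) (ha1 : a < 1) (htx : t < x) :
    ∫ s in t..x, (x - s) ^ (-a) * (s - t) ^ (a - 1) = Real.Gamma a * Real.Gamma (1 - a) := by
  have hc : (0:ℝ) < x - t := by linarith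
  set c := x - t with hcdef
  have hct : c + t = x := by rw [hcdef]; ring
  have step1 : ∫ s in t..x, (x - s) ^ (-a) * (s - t) ^ (a - 1)
      = ∫ u in (0:ℝ)..c, (c - u) ^ (-a) * u ^ (a - 1) := by
    have h := intervalIntegral.integral_comp_add_right (a := (0:ℝ)) (b := c)
      (fun s => (x - s) ^ (-a) * (s - t) ^ (a - 1)) t
    rw [zero_add, hct] at h
    rw [← h]
    refine intervalIntegral.integral_congr fun u _ => ?_
    have e1 : x - (u + t) = c - u := by rw [hcdef]; ring
    simp only [e1, add_sub_cancel_right]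
  have step2 : ∫ u in (0:ℝ)..c, (c - u) ^ (-a) * u ^ (a - 1)
      = c • ∫ v in (0:ℝ)..1, (c - c * v) ^ (-a) * (c * v) ^ (a - 1) := by
    have h := intervalIntegral.integral_comp_mul_left (a := (0:ℝ)) (b := 1)
      (fun u => (c - u) ^ (-a) * u ^ (a - 1)) (ne_of_gt hc)
    rw [mul_zero, mul_one] at h
    rw [h, smul_smul, mul_inv_cancel₀ (ne_of_gt hc), one_smul]
  have hcpow : c ^ (-a) * c ^ (a - 1) = c⁻¹ := by
    rw [← Real.rpow_add hc, show -a + (a - 1) = (-1 : ℝ) by ring, Real.rpow_neg_one]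
  have step3 : ∫ v in (0:ℝ)..1, (c - c * v) ^ (-a) * (c * v) ^ (a - 1)
      = c⁻¹ * ∫ v in (0:ℝ)..1, v ^ (a - 1) * (1 - v) ^ (-a) := by
    rw [← intervalIntegral.integral_const_mul]
    refine intervalIntegral.integral_congr fun v hv => ?_
    rw [uIcc_of_le zero_le_one] at hv
    have h1v : (0:ℝ) ≤ 1 - v := by linarith [hv.2]
    rw [show c - c * v = c * (1 - v) by ring, Real.mul_rpow hc.le h1v,
      Real.mul_rpow hc.le hv.1, ← hcpow]
    ring
  rw [step1, step2, step3, smul_eq_mul, ← mul_assoc, mul_inv_cancel₀ (ne_of_gt hc), one_mul,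
    real_beta ha ha1]



lemma kernel_intervalIntegrable {a t x : ℝ} (ha : 0 < a) (ha1 : a < 1) (htx : t ≤ x) :
    IntervalIntegrable (fun s => (x - s) ^ (-a) * (s - t) ^ (a - 1)) volume t x := by
  rcases eq_or_lt_of_le htx with rfl | htx
  · exact IntervalIntegrable.refl
  set m := (t + x) / 2 with hm
  have htm : t < m := by rw [hm]; linarith
  have hmx : m < x := by rw [hm]; linarith
  have h1 : IntervalIntegrable (fun s => (s - t) ^ (a - 1)) volume t m := by
    have := (intervalIntegrable_rpow' (a := 0) (b := m - t)
      (show (-1:ℝ) < a - 1 by linarith)).comp_sub_right t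
    simpa using this
  have hg1 : ContinuousOn (fun s => (x - s) ^ (-a)) (uIcc t m) := by
    rw [uIcc_of_le htm.le]
    refine ((continuous_const.sub continuous_id).continuousOn).rpow_const fun s hs => ?_
    exact Or.inl (ne_of_gt (by rcases hs with ⟨_, h2⟩; simp only [Pi.sub_apply, id_eq]; linarith))
  have piece1 := h1.continuousOn_mul hg1
  have h2 : IntervalIntegrable (fun s => (x - s) ^ (-a)) volume m x := by
    have := (intervalIntegrable_rpow' (a := x - m) (b := 0)
      (show (-1:ℝ) < -a by linarith)).comp_sub_left x
    simpa using this
  have hg2 : ContinuousOn (fun s => (s - t) ^ (a - 1)) (uIcc m x) := by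
    rw [uIcc_of_le hmx.le]
    refine ((continuous_id.sub continuous_const).continuousOn).rpow_const fun s hs => ?_
    exact Or.inl (ne_of_gt (by rcases hs with ⟨h1', _⟩; simp only [Pi.sub_apply, id_eq]; linarith))
  have piece2 := h2.mul_continuousOn hg2
  exact piece1.trans piece2

lemma ae_hasDerivAt_integral {h : ℝ → ℝ} (hi : Integrable h volume) :
    ∀ᵐ x : ℝ, HasDerivAt (fun y => ∫ t in (0:ℝ)..y, h t) (h x) x := by
  filter_upwards [IsUnifLocDoublingMeasure.ae_tendsto_average_norm_sub (μ := volume)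
    hi.locallyIntegrable 1] with x hx
  have key : Tendsto (fun y : ℝ => ⨍ s in closedBall x |y - x|, ‖h s - h x‖) (𝓝[≠] x) (𝓝 0) := by
    refine hx (fun _ => x) (fun y => |y - x|) ?_ ?_
    · rw [tendsto_nhdsWithin_iff]
      constructor
      · have : Tendsto (fun y : ℝ => |y - x|) (𝓝 x) (𝓝 |x - x|) :=
          ((continuous_id.sub continuous_const).abs).tendsto x
        simpa using this.mono_left nhdsWithin_le_nhds
      · filter_upwards [self_mem_nhdsWithin] with y hy
        exact abs_pos.mpr (sub_ne_zero.mpr hy)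
    · filter_upwards with y
      simp [abs_nonneg]
  set F : ℝ → ℝ := fun y => ∫ t in (0:ℝ)..y, h t with hF
  set q : ℝ → ℝ := fun y => ‖y - x‖⁻¹ * ‖F y - F x - (y - x) • h x‖ with hq
  have hq0 : q x = 0 := by simp [hq]
  have main : Tendsto q (𝓝[≠] x) (𝓝 0) := by
    have bound : ∀ᶠ y in 𝓝[≠] x, q y ≤ 2 * ⨍ s in closedBall x |y - x|, ‖h s - h x‖ := by
      filter_upwards [self_mem_nhdsWithin] with y hy
      have hyx : y ≠ x := hy
      set r := |y - x| with hr
      have hr0 : 0 < r := abs_pos.mpr (sub_ne_zero.mpr hyx)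
      have hFd : F y - F x = ∫ t in x..y, h t :=
        integral_interval_sub_left (hi.intervalIntegrable) (hi.intervalIntegrable)
      have hconst : (y - x) • h x = ∫ _ in x..y, h x := by
        rw [intervalIntegral.integral_const]
      have hsub : F y - F x - (y - x) • h x = ∫ t in x..y, (h t - h x) := by
        rw [hFd, hconst, ← intervalIntegral.integral_sub hi.intervalIntegrable
          intervalIntegrable_const]
      have hball : IntegrableOn (fun s => ‖h s - h x‖) (closedBall x r) volume := by
        refine ((hi.integrableOn.sub ?_).norm)
        exact integrableOn_const measure_closedBall_lt_top.ne
      have hsubset : Set.uIoc x y ⊆ closedBall x r := by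
        rw [closedBall_eq_Icc]
        refine subset_trans Ioc_subset_Icc_self (Icc_subset_Icc ?_ ?_)
        · rcases le_total x y with hc | hc
          · rw [min_eq_left hc]; linarith [hr0.le]
          · rw [min_eq_right hc, hr, abs_of_nonpos (by linarith : y - x ≤ 0)]; linarith
        · rcases le_total x y with hc | hc
          · rw [max_eq_right hc, hr, abs_of_nonneg (by linarith : (0:ℝ) ≤ y - x)]; linarith
          · rw [max_eq_left hc]; linarith [hr0.le]
      have hineq1 : ‖∫ t in x..y, (h t - h x)‖ ≤ ∫ s in Set.uIoc x y, ‖h s - h x‖ :=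
        intervalIntegral.norm_integral_le_integral_norm_uIoc
      have hineq2 : ∫ s in Set.uIoc x y, ‖h s - h x‖ ≤ ∫ s in closedBall x r, ‖h s - h x‖ := by
        refine setIntegral_mono_set hball ?_ (HasSubset.Subset.eventuallyLE hsubset)
        filter_upwards with s using norm_nonneg _
      have havg : (2:ℝ) * ⨍ s in closedBall x r, ‖h s - h x‖
          = r⁻¹ * ∫ s in closedBall x r, ‖h s - h x‖ := by
        rw [setAverage_eq, measureReal_def, Real.volume_closedBall, ENNReal.toReal_ofReal (by linarith), smul_eq_mul]
        rw [← mul_assoc]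
        congr 1
        rw [mul_inv]
        ring
      simp only [hq]
      rw [havg, hsub]
      have : ‖y - x‖⁻¹ = r⁻¹ := by rw [hr, Real.norm_eq_abs]
      rw [this]
      exact mul_le_mul_of_nonneg_left (hineq1.trans hineq2) (inv_nonneg.2 hr0.le)
    refine squeeze_zero' ?_ bound ?_
    · filter_upwards with y
      exact mul_nonneg (inv_nonneg.2 (norm_nonneg _)) (norm_nonneg _)
    · simpa using key.const_mul (2:ℝ)
  rw [hasDerivAt_iff_tendsto]
  rw [← nhdsNE_sup_pure x]
  refine main.sup ?_
  have := tendsto_pure_nhds q x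
  rwa [hq0] at this



lemma setIntegral_indicator_inter {A B : Set ℝ} (hA : MeasurableSet A) (f : ℝ → ℝ) :
    ∫ t, A.indicator f t ∂(volume.restrict B) = ∫ t in A ∩ B, f t := by
  rw [MeasureTheory.integral_indicator hA, Measure.restrict_restrict hA]

lemma swap_core {a x : ℝ} (ha : 0 < a) (ha1 : a < 1)
    {g : ℝ → ℝ} (hg : IntegrableOn g (Ioc 0 1)) (hx0 : 0 < x) (hx1 : x ≤ 1) :
    ∫ s in Ioc 0 x, (x - s) ^ (-a) * ∫ t in Ioc 0 s, (s - t) ^ (a - 1) * g t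
      = Real.Gamma a * Real.Gamma (1 - a) * ∫ t in Ioc 0 x, g t := by
  set μ := volume.restrict (Ioc (0:ℝ) x) with hμ
  set K : ℝ × ℝ → ℝ := fun q => (x - q.1) ^ (-a) * (q.1 - q.2) ^ (a - 1) with hK
  set S : Set (ℝ × ℝ) := {q : ℝ × ℝ | q.2 < q.1} with hS
  set F : ℝ × ℝ → ℝ := fun p => S.indicator K p * g p.2 with hF
  have hSm : MeasurableSet S := measurableSet_lt measurable_snd measurable_fst
  have hKm : Measurable K := by
    rw [hK]; measurability
  have hgx : IntegrableOn g (Ioc 0 x) := hg.mono_set (Ioc_subset_Ioc_right hx1)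
  have hgm : AEStronglyMeasurable g μ := hgx.aestronglyMeasurable
  have hFm : AEStronglyMeasurable F (μ.prod μ) :=
    ((hKm.indicator hSm).aestronglyMeasurable).mul hgm.comp_snd
  -- section in s for fixed t
  have hsec : ∀ t : ℝ, (fun s => F (s, t))
      = fun s => (Ioi t).indicator (fun s' => (x - s') ^ (-a) * (s' - t) ^ (a - 1)) s * g t := by
    intro t
    funext s
    by_cases hst : t < s
    · rw [hF]
      simp only
      rw [Set.indicator_of_mem (show (s, t) ∈ S from hst),
        Set.indicator_of_mem (show s ∈ Ioi t from hst)]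
    · rw [hF]
      simp only
      rw [Set.indicator_of_notMem (show (s, t) ∉ S from hst),
        Set.indicator_of_notMem (show s ∉ Ioi t from hst)]
  -- section in t for fixed s
  have hsec2 : ∀ s : ℝ, (fun t => F (s, t))
      = fun t => (Iio s).indicator (fun t' => (x - s) ^ (-a) * ((s - t') ^ (a - 1) * g t')) t := by
    intro s
    funext t
    by_cases hst : t < s
    · rw [hF]
      simp only
      rw [Set.indicator_of_mem (show (s, t) ∈ S from hst),
        Set.indicator_of_mem (show t ∈ Iio s from hst)]
      ring
    · rw [hF]
      simp only
      rw [Set.indicator_of_notMem (show (s, t) ∉ S from hst),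
        Set.indicator_of_notMem (show t ∉ Iio s from hst), zero_mul]
  have hIoi_inter : ∀ t : ℝ, 0 < t → Ioi t ∩ Ioc 0 x = Ioc t x := by
    intro t ht
    ext s
    exact ⟨fun ⟨h1, h2⟩ => ⟨h1, h2.2⟩, fun ⟨h1, h2⟩ => ⟨h1, lt_trans ht h1, h2⟩⟩
  have hker_int : ∀ t : ℝ, t ≤ x →
      IntegrableOn (fun s' => (x - s') ^ (-a) * (s' - t) ^ (a - 1)) (Ioc t x) volume := by
    intro t htx
    have := kernel_intervalIntegrable ha ha1 htx
    rwa [intervalIntegrable_iff, uIoc_of_le htx] at this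
  have hbeta : ∀ t : ℝ, t < x →
      ∫ s' in Ioc t x, (x - s') ^ (-a) * (s' - t) ^ (a - 1)
        = Real.Gamma a * Real.Gamma (1 - a) := by
    intro t htx
    rw [← intervalIntegral.integral_of_le htx.le]
    exact beta_conv ha ha1 htx
  -- integrability on the product
  have hFi : Integrable F (μ.prod μ) := by
    rw [integrable_prod_iff' hFm]
    constructor
    · filter_upwards [ae_restrict_mem measurableSet_Ioc] with t ht
      rw [hsec t]
      apply Integrable.mul_const
      rw [integrable_indicator_iff measurableSet_Ioi]
      have : μ.restrict (Ioi t) = volume.restrict (Ioi t ∩ Ioc 0 x) := by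
        rw [hμ, Measure.restrict_restrict measurableSet_Ioi]
      rw [IntegrableOn, this, hIoi_inter t ht.1, ← IntegrableOn]
      exact hker_int t ht.2
    · refine Integrable.congr (((hgx.norm).const_mul (Real.Gamma a * Real.Gamma (1 - a)))) ?_
      have hxne : ∀ᵐ t : ℝ ∂μ, t ≠ x := by
        refine ae_restrict_of_ae ?_
        filter_upwards [measure_eq_zero_iff_ae_notMem.mp (Real.volume_singleton (a := x))] with t ht
        simpa using ht
      filter_upwards [ae_restrict_mem measurableSet_Ioc, hxne] with t ht htx
      have htx' : t < x := lt_of_le_of_ne ht.2 htx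
      have : (fun s => ‖F (s, t)‖)
          = fun s => (Ioi t).indicator
              (fun s' => ‖(x - s') ^ (-a) * (s' - t) ^ (a - 1)‖) s * ‖g t‖ := by
        rw [show (fun s => ‖F (s, t)‖) = fun s => ‖(fun s' => F (s', t)) s‖ from rfl, hsec t]
        funext s
        rw [norm_mul, norm_indicator_eq_indicator_norm]
      rw [this]
      have : ∫ s, (Ioi t).indicator
            (fun s' => ‖(x - s') ^ (-a) * (s' - t) ^ (a - 1)‖) s * ‖g t‖ ∂μ
          = (∫ s in Ioi t ∩ Ioc 0 x, ‖(x - s) ^ (-a) * (s - t) ^ (a - 1)‖) * ‖g t‖ := by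
        rw [MeasureTheory.integral_mul_const, hμ, setIntegral_indicator_inter measurableSet_Ioi]
      rw [this, hIoi_inter t ht.1]
      have hnorm : ∫ s in Ioc t x, ‖(x - s) ^ (-a) * (s - t) ^ (a - 1)‖
          = ∫ s in Ioc t x, (x - s) ^ (-a) * (s - t) ^ (a - 1) := by
        refine setIntegral_congr_fun measurableSet_Ioc fun s hs => ?_
        have h1 : (0:ℝ) ≤ (x - s) ^ (-a) := Real.rpow_nonneg (by linarith [hs.2]) _
        have h2 : (0:ℝ) ≤ (s - t) ^ (a - 1) := Real.rpow_nonneg (by linarith [hs.1]) _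
        rw [norm_mul, Real.norm_eq_abs, Real.norm_eq_abs, abs_of_nonneg h1, abs_of_nonneg h2]
      rw [hnorm, hbeta t htx']
  -- swap
  have hswap := integral_integral_swap (f := fun s t => F (s, t)) (μ := μ) (ν := μ) hFi
  have hLHS : ∫ s, ∫ t, F (s, t) ∂μ ∂μ
      = ∫ s in Ioc 0 x, (x - s) ^ (-a) * ∫ t in Ioc 0 s, (s - t) ^ (a - 1) * g t := by
    rw [hμ]
    refine setIntegral_congr_ae measurableSet_Ioc ?_
    filter_upwards with s hs
    rw [hsec2 s, ← hμ]
    have h1 : ∫ t, (Iio s).indicator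
          (fun t' => (x - s) ^ (-a) * ((s - t') ^ (a - 1) * g t')) t ∂μ
        = ∫ t in Iio s ∩ Ioc 0 x, (x - s) ^ (-a) * ((s - t) ^ (a - 1) * g t) := by
      rw [hμ, setIntegral_indicator_inter measurableSet_Iio]
    have h2 : Iio s ∩ Ioc 0 x = Ioo 0 s := by
      ext t
      exact ⟨fun ⟨ht1, ht2⟩ => ⟨ht2.1, ht1⟩, fun ⟨ht1, ht2⟩ => ⟨ht2, ht1, le_trans (le_of_lt ht2) hs.2⟩⟩
    rw [h1, h2, ← integral_Ioc_eq_integral_Ioo, MeasureTheory.integral_const_mul]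
  have hRHS : ∫ t, ∫ s, F (s, t) ∂μ ∂μ
      = Real.Gamma a * Real.Gamma (1 - a) * ∫ t in Ioc 0 x, g t := by
    have hxne : ∀ᵐ t : ℝ ∂volume, t ≠ x := by
      filter_upwards [measure_eq_zero_iff_ae_notMem.mp (Real.volume_singleton (a := x))] with t ht
      simpa using ht
    have step : ∫ t, ∫ s, F (s, t) ∂μ ∂μ
        = ∫ t in Ioc 0 x, Real.Gamma a * Real.Gamma (1 - a) * g t := by
      rw [hμ]
      refine setIntegral_congr_ae measurableSet_Ioc ?_
      filter_upwards [hxne] with t htx ht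
      have htx' : t < x := lt_of_le_of_ne ht.2 htx
      rw [hsec t]
      have h1 : ∫ s, (Ioi t).indicator
            (fun s' => (x - s') ^ (-a) * (s' - t) ^ (a - 1)) s * g t ∂μ
          = (∫ s in Ioi t ∩ Ioc 0 x, (x - s) ^ (-a) * (s - t) ^ (a - 1)) * g t := by
        rw [MeasureTheory.integral_mul_const, hμ, setIntegral_indicator_inter measurableSet_Ioi]
      rw [h1, hIoi_inter t ht.1, hbeta t htx']
    rw [step, MeasureTheory.integral_const_mul]
  rw [← hLHS, hswap, hRHS]




lemma frac_integrable {a : ℝ} (ha : 0 < a) {ψ : ℝ → ℝ} (hψ : IntegrableOn ψ (Ioc 0 1)) :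
    IntegrableOn (fun x => ∫ t in Ioc 0 x, (x - t) ^ (a - 1) * ψ t) (Ioc 0 1) volume := by
  set ν := volume.restrict (Ioc (0:ℝ) 1) with hν
  set K1 : ℝ × ℝ → ℝ := fun q => (q.1 - q.2) ^ (a - 1) with hK1
  set S : Set (ℝ × ℝ) := {q : ℝ × ℝ | q.2 < q.1} with hS
  set G : ℝ × ℝ → ℝ := fun p => S.indicator K1 p * ψ p.2 with hG
  have hSm : MeasurableSet S := measurableSet_lt measurable_snd measurable_fst
  have hK1m : Measurable K1 := by rw [hK1]; measurability
  have hψm : AEStronglyMeasurable ψ ν := hψ.aestronglyMeasurable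
  have hGm : AEStronglyMeasurable G (ν.prod ν) :=
    ((hK1m.indicator hSm).aestronglyMeasurable).mul hψm.comp_snd
  have hsec : ∀ t : ℝ, (fun x => G (x, t))
      = fun x => (Ioi t).indicator (fun x' => (x' - t) ^ (a - 1)) x * ψ t := by
    intro t
    funext x
    by_cases hst : t < x
    · rw [hG]
      simp only
      rw [Set.indicator_of_mem (show (x, t) ∈ S from hst),
        Set.indicator_of_mem (show x ∈ Ioi t from hst)]
    · rw [hG]
      simp only
      rw [Set.indicator_of_notMem (show (x, t) ∉ S from hst),
        Set.indicator_of_notMem (show x ∉ Ioi t from hst)]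
  have hIoi_inter : ∀ t : ℝ, 0 < t → Ioi t ∩ Ioc 0 1 = Ioc t 1 := by
    intro t ht
    ext s
    exact ⟨fun ⟨h1, h2⟩ => ⟨h1, h2.2⟩, fun ⟨h1, h2⟩ => ⟨h1, lt_trans ht h1, h2⟩⟩
  have hker : ∀ t : ℝ, t ≤ 1 →
      IntegrableOn (fun x => (x - t) ^ (a - 1)) (Ioc t 1) volume := by
    intro t ht
    have h := (intervalIntegrable_rpow' (a := 0) (b := 1 - t)
      (show (-1:ℝ) < a - 1 by linarith)).comp_sub_right t
    simp only [zero_add, sub_add_cancel] at h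
    rwa [intervalIntegrable_iff, uIoc_of_le ht] at h
  have hGi : Integrable G (ν.prod ν) := by
    rw [integrable_prod_iff' hGm]
    constructor
    · filter_upwards [ae_restrict_mem measurableSet_Ioc] with t ht
      rw [hsec t]
      apply Integrable.mul_const
      rw [integrable_indicator_iff measurableSet_Ioi]
      have hre : ν.restrict (Ioi t) = volume.restrict (Ioi t ∩ Ioc 0 1) := by
        rw [hν, Measure.restrict_restrict measurableSet_Ioi]
      rw [IntegrableOn, hre, hIoi_inter t ht.1, ← IntegrableOn]
      exact hker t ht.2
    · have hc : Continuous fun u : ℝ => u ^ a :=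
        continuous_iff_continuousAt.2 fun u => Real.continuousAt_rpow_const u a (Or.inr ha.le)
      have hmeas : Measurable fun t : ℝ => (1 - t) ^ a / a :=
        ((hc.comp (continuous_const.sub continuous_id)).measurable).div_const a
      have hf1 : Integrable (fun t => ((1 - t) ^ a / a) * ‖ψ t‖) ν := by
        refine Integrable.mono' (hψ.norm.const_mul (1 / a)) ?_ ?_
        · exact (hmeas.aestronglyMeasurable).mul hψm.norm
        · filter_upwards [ae_restrict_mem measurableSet_Ioc] with t ht
          have h1t : (0:ℝ) ≤ 1 - t := by linarith [ht.2]
          have hle : (1 - t) ^ a ≤ 1 := Real.rpow_le_one h1t (by linarith [ht.1]) ha.le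
          have h0 : (0:ℝ) ≤ (1 - t) ^ a := Real.rpow_nonneg h1t _
          rw [Real.norm_eq_abs, abs_mul, abs_of_nonneg (by positivity : (0:ℝ) ≤ (1 - t) ^ a / a),
            abs_norm, one_div]
          apply mul_le_mul_of_nonneg_right _ (norm_nonneg _)
          rw [div_eq_mul_inv]
          exact mul_le_mul_of_nonneg_right hle (by positivity) |>.trans (by rw [one_mul])
      refine hf1.congr ?_
      filter_upwards [ae_restrict_mem measurableSet_Ioc] with t ht
      have heq1 : (fun x => ‖G (x, t)‖)
          = fun x => (Ioi t).indicator (fun x' => ‖(x' - t) ^ (a - 1)‖) x * ‖ψ t‖ := by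
        rw [show (fun x => ‖G (x, t)‖) = fun x => ‖(fun x' => G (x', t)) x‖ from rfl, hsec t]
        funext x
        rw [norm_mul, norm_indicator_eq_indicator_norm]
      have heq2 : ∫ x, ‖G (x, t)‖ ∂ν = (∫ x in Ioc t 1, ‖(x - t) ^ (a - 1)‖) * ‖ψ t‖ := by
        rw [heq1, MeasureTheory.integral_mul_const, hν, setIntegral_indicator_inter measurableSet_Ioi,
          hIoi_inter t ht.1]
      rw [heq2]
      have heq3 : ∫ x in Ioc t 1, ‖(x - t) ^ (a - 1)‖ = (1 - t) ^ a / a := by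
        have : ∫ x in Ioc t 1, ‖(x - t) ^ (a - 1)‖ = ∫ x in Ioc t 1, (x - t) ^ (a - 1) := by
          refine setIntegral_congr_fun measurableSet_Ioc fun x hx => ?_
          rw [Real.norm_eq_abs, abs_of_nonneg (Real.rpow_nonneg (by linarith [hx.1]) _)]
        rw [this, ← intervalIntegral.integral_of_le ht.2,
          integral_rpow_shift (by linarith : (-1:ℝ) < a - 1), sub_add_cancel]
      rw [heq3]
  have hInt := hGi.integral_prod_left
  refine hInt.congr ?_
  filter_upwards [ae_restrict_mem measurableSet_Ioc] with x hx
  have hsec2 : (fun t => G (x, t)) = fun t => (Iio x).indicator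
      (fun t' => (x - t') ^ (a - 1) * ψ t') t := by
    funext t
    by_cases hst : t < x
    · rw [hG]
      simp only
      rw [Set.indicator_of_mem (show (x, t) ∈ S from hst),
        Set.indicator_of_mem (show t ∈ Iio x from hst)]
    · rw [hG]
      simp only
      rw [Set.indicator_of_notMem (show (x, t) ∉ S from hst),
        Set.indicator_of_notMem (show t ∉ Iio x from hst), zero_mul]
  have hinter : Iio x ∩ Ioc 0 1 = Ioo 0 x := by
    ext t
    exact ⟨fun ⟨h1, h2⟩ => ⟨h2.1, h1⟩, fun ⟨h1, h2⟩ => ⟨h2, h1, le_trans h2.le hx.2⟩⟩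
  rw [hsec2, hν, setIntegral_indicator_inter measurableSet_Iio, hinter,
    ← integral_Ioc_eq_integral_Ioo]




lemma RL_apply {α : ℝ} (hα : α ≠ 0) (f : ℝ → ℝ) (x : ℝ) :
    RL α f x = (1 / Real.Gamma α) * ∫ t in (0:ℝ)..x, (x - t) ^ (α - 1) * f t := by
  rw [RL, if_neg hα]

lemma forward_core {α : ℝ} (hα0 : 0 < α) (hα1 : α < 1) {φ : ℝ → ℝ}
    (hφ : IntegrableOn φ (Ioc 0 1)) {x : ℝ} (hx : x ∈ Ioc (0:ℝ) 1) :
    RL (1 - α) (RL α φ) x = ∫ t in Ioc 0 x, φ t := by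
  have hα : α ≠ 0 := ne_of_gt hα0
  have hα' : 1 - α ≠ 0 := ne_of_gt (by linarith)
  have hΓα : Real.Gamma α ≠ 0 := (Real.Gamma_pos_of_pos hα0).ne'
  have hΓβ : Real.Gamma (1 - α) ≠ 0 := (Real.Gamma_pos_of_pos (by linarith)).ne'
  rw [RL_apply hα', intervalIntegral.integral_of_le hx.1.le]
  have hcong : ∀ s ∈ Ioc (0:ℝ) x, (x - s) ^ (1 - α - 1) * RL α φ s
      = (1 / Real.Gamma α) * ((x - s) ^ (-α) * ∫ t in Ioc 0 s, (s - t) ^ (α - 1) * φ t) := by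
    intro s hs
    rw [RL_apply hα, intervalIntegral.integral_of_le hs.1.le,
      show (1 - α - 1 : ℝ) = -α by ring]
    ring
  rw [setIntegral_congr_fun measurableSet_Ioc hcong, MeasureTheory.integral_const_mul,
    swap_core hα0 hα1 hφ hx.1 hx.2]
  field_simp

lemma forward {α : ℝ} (hα0 : 0 < α) (hα1 : α < 1) {φ f : ℝ → ℝ}
    (hφ : IntegrableOn φ (Ioc 0 1))
    (hsol : ∀ᵐ x ∂(volume.restrict (Ioc (0:ℝ) 1)), RL α φ x = f x)
    {x : ℝ} (hx : x ∈ Ioc (0:ℝ) 1) :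
    RL (1 - α) f x = ∫ t in Ioc 0 x, φ t := by
  have hα' : 1 - α ≠ 0 := ne_of_gt (by linarith)
  rw [← forward_core hα0 hα1 hφ hx, RL_apply hα', RL_apply hα']
  congr 1
  rw [intervalIntegral.integral_of_le hx.1.le, intervalIntegral.integral_of_le hx.1.le]
  refine setIntegral_congr_ae measurableSet_Ioc ?_
  filter_upwards [(ae_restrict_iff' measurableSet_Ioc).mp hsol] with s hs hmem
  rw [hs ⟨hmem.1, le_trans hmem.2 hx.2⟩]

lemma inj {h f : ℝ → ℝ} (hh : IntegrableOn h (Ioc 0 1)) (hf : IntegrableOn f (Ioc 0 1))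
    (heq : ∀ x ∈ Ioc (0:ℝ) 1, ∫ t in Ioc 0 x, h t = ∫ t in Ioc 0 x, f t) :
    ∀ᵐ x ∂(volume.restrict (Ioc (0:ℝ) 1)), h x = f x := by
  set H : ℝ → ℝ := (Ioc (0:ℝ) 1).indicator (fun t => h t - f t) with hH
  have hHi : Integrable H volume :=
    (integrable_indicator_iff measurableSet_Ioc).2 (hh.sub hf)
  have hG0 : ∀ y : ℝ, (∫ t in (0:ℝ)..y, H t) = 0 := by
    intro y
    rcases le_or_gt y 0 with hy | hy
    · rw [intervalIntegral.integral_of_ge hy]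
      have : ∫ t in Ioc y 0, H t = 0 := by
        rw [setIntegral_congr_fun measurableSet_Ioc
          (fun t ht => indicator_of_notMem (fun hc => absurd (lt_of_lt_of_le hc.1 ht.2) (lt_irrefl 0)) _)]
        exact MeasureTheory.integral_zero _ _
      rw [this, neg_zero]
    · rw [intervalIntegral.integral_of_le hy.le, hH,
        MeasureTheory.setIntegral_indicator measurableSet_Ioc, Set.Ioc_inter_Ioc, max_self]
      have hz : min y 1 ∈ Ioc (0:ℝ) 1 := ⟨lt_min hy one_pos, min_le_right _ _⟩
      have h1 : IntegrableOn h (Ioc 0 (min y 1)) := hh.mono_set (Ioc_subset_Ioc_right hz.2)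
      have h2 : IntegrableOn f (Ioc 0 (min y 1)) := hf.mono_set (Ioc_subset_Ioc_right hz.2)
      rw [integral_sub h1 h2, heq _ hz, sub_self]
  have hd := ae_hasDerivAt_integral hHi
  have hGfun : (fun y => ∫ t in (0:ℝ)..y, H t) = fun _ => (0:ℝ) := funext hG0
  rw [hGfun] at hd
  have hH0 : ∀ᵐ x : ℝ ∂volume, H x = 0 := by
    filter_upwards [hd] with x hx
    exact ((hasDerivAt_const x (0:ℝ)).unique hx).symm
  filter_upwards [ae_restrict_of_ae hH0, ae_restrict_mem measurableSet_Ioc] with x hx0 hxm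
  rw [hH, indicator_of_mem hxm] at hx0
  linarith [hx0]


end AbelAux

open AbelAux

/-- Solvability of the Abel integral equation `I^α φ = f` in `L¹(0,1)`:
it is solvable iff `I^(1-α) f ∈ AC([0,1])` with `(I^(1-α) f)(0) = 0`, and in that
case the solution is unique and given by `φ = d/dx (I^(1-α) f)` a.e. -/
theorem abel_equation_solvability (α : ℝ) (hα0 : 0 < α) (hα1 : α < 1)
    (f : ℝ → ℝ) (hf : L1 f) :
    ((∃ φ : ℝ → ℝ, L1 φ ∧
        ∀ᵐ x ∂(volume.restrict (Set.Ioc (0:ℝ) 1)), RL α φ x = f x)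
      ↔ ACval (RL (1 - α) f) 0)
    ∧ ∀ φ : ℝ → ℝ, L1 φ →
        (∀ᵐ x ∂(volume.restrict (Set.Ioc (0:ℝ) 1)), RL α φ x = f x) →
        ∀ᵐ x ∂(volume.restrict (Set.Ioc (0:ℝ) 1)), φ x = deriv (RL (1 - α) f) x := by
  have hαne : α ≠ 0 := ne_of_gt hα0
  have hβne : 1 - α ≠ 0 := ne_of_gt (by linarith)
  have hβ0 : (0:ℝ) < 1 - α := by linarith
  have hβ1 : 1 - α < 1 := by linarith
  have hΓβ : Real.Gamma (1 - α) ≠ 0 := (Real.Gamma_pos_of_pos hβ0).ne'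
  have hxne1 : ∀ᵐ x : ℝ ∂volume, x ≠ 1 := by
    filter_upwards [measure_eq_zero_iff_ae_notMem.mp (Real.volume_singleton (a := (1:ℝ)))] with t ht
    simpa using ht
  constructor
  · constructor
    · rintro ⟨φ, hφ, hsol⟩
      refine ⟨φ, hφ, fun x hx => ?_⟩
      rw [forward hα0 hα1 hφ hsol hx, zero_add, intervalIntegral.integral_of_le hx.1.le]
    · rintro ⟨ψ, hψ, hAC⟩
      refine ⟨ψ, hψ, ?_⟩
      have hcore : ∀ s ∈ Ioc (0:ℝ) 1, RL (1 - α) (RL α ψ) s = ∫ t in Ioc 0 s, ψ t :=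
        fun s hs => forward_core hα0 hα1 hψ hs
      have hhf : ∀ s ∈ Ioc (0:ℝ) 1, RL (1 - α) (RL α ψ) s = RL (1 - α) f s := by
        intro s hs
        rw [hcore s hs, hAC s hs, zero_add, intervalIntegral.integral_of_le hs.1.le]
      have hhL1 : IntegrableOn (RL α ψ) (Ioc 0 1) := by
        refine ((frac_integrable hα0 hψ).const_mul (1 / Real.Gamma α)).congr ?_
        filter_upwards [ae_restrict_mem measurableSet_Ioc] with x hx
        rw [RL_apply hαne, intervalIntegral.integral_of_le hx.1.le]
      have hint : ∀ x ∈ Ioc (0:ℝ) 1, ∫ t in Ioc 0 x, RL α ψ t = ∫ t in Ioc 0 x, f t := by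
        intro x hx
        have A := swap_core hβ0 hβ1 hhL1 hx.1 hx.2
        have B := swap_core hβ0 hβ1 hf hx.1 hx.2
        rw [show (1 - (1 - α) : ℝ) = α by ring] at A B
        have hLL : ∫ s in Ioc 0 x, (x - s) ^ (-(1 - α)) *
              ∫ t in Ioc 0 s, (s - t) ^ (1 - α - 1) * RL α ψ t
            = ∫ s in Ioc 0 x, (x - s) ^ (-(1 - α)) *
              ∫ t in Ioc 0 s, (s - t) ^ (1 - α - 1) * f t := by
          refine setIntegral_congr_fun measurableSet_Ioc fun s hs => ?_
          have hs1 : s ∈ Ioc (0:ℝ) 1 := ⟨hs.1, le_trans hs.2 hx.2⟩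
          have h3 := hhf s hs1
          rw [RL_apply hβne, RL_apply hβne,
            intervalIntegral.integral_of_le hs.1.le, intervalIntegral.integral_of_le hs.1.le] at h3
          have h2 := mul_left_cancel₀ (one_div_ne_zero hΓβ) h3
          rw [h2]
        have hAB := (A.symm.trans hLL).trans B
        exact mul_left_cancel₀ (mul_ne_zero hΓβ (Real.Gamma_pos_of_pos hα0).ne') hAB
      exact inj hhL1 hf hint
  · intro φ hφ hsol
    have hfwd : ∀ x ∈ Ioc (0:ℝ) 1, RL (1 - α) f x = ∫ t in Ioc 0 x, φ t :=
      fun x hx => forward hα0 hα1 hφ hsol hx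
    set Φ : ℝ → ℝ := (Ioc (0:ℝ) 1).indicator φ with hΦ
    have hΦi : Integrable Φ volume := (integrable_indicator_iff measurableSet_Ioc).2 hφ
    have hd := ae_hasDerivAt_integral hΦi
    have hGeq : ∀ y ∈ Ioc (0:ℝ) 1, (∫ t in (0:ℝ)..y, Φ t) = RL (1 - α) f y := by
      intro y hy
      rw [intervalIntegral.integral_of_le hy.1.le, hΦ,
        MeasureTheory.setIntegral_indicator measurableSet_Ioc, Set.Ioc_inter_Ioc, max_self,
        min_eq_left hy.2, hfwd y hy]
    filter_upwards [ae_restrict_mem measurableSet_Ioc, ae_restrict_of_ae hd,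
      ae_restrict_of_ae hxne1] with x hx hdx hne
    have hxo : x ∈ Ioo (0:ℝ) 1 := ⟨hx.1, lt_of_le_of_ne hx.2 hne⟩
    have hnb : (fun y => ∫ t in (0:ℝ)..y, Φ t) =ᶠ[nhds x] RL (1 - α) f := by
      filter_upwards [Ioo_mem_nhds hxo.1 hxo.2] with y hy
      exact hGeq y ⟨hy.1, hy.2.le⟩
    rw [← hnb.deriv_eq, hdx.deriv, hΦ, indicator_of_mem hx]
end

section
/- Let 0 < α ≤ 1 and 0 ≤ γ₁ ≤ 1-α. The kernel of the Hilfer fractional derivative D^(α,γ₁)_H on X¹_H = {f : I^(1-α-γ₁) f ∈ AC([0,1])} is the one-dimensional space {c·x^(α+γ₁-1) : c ∈ ℝ}. -/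
open MeasureTheory Real Set Filter

section AuxHilfer

open intervalIntegral

lemma primitive_add {φ : ℝ → ℝ} (hφ : Integrable φ) (u v : ℝ) :
    (∫ t in (0:ℝ)..u, φ t) + ∫ t in u..v, φ t = ∫ t in (0:ℝ)..v, φ t :=
  integral_add_adjacent_intervals hφ.intervalIntegrable hφ.intervalIntegrable

lemma mono_primitive {φ : ℝ → ℝ} (hφ : Integrable φ) (h0 : ∀ t, 0 ≤ φ t) :
    Monotone (fun y => ∫ t in (0:ℝ)..y, φ t) := by
  intro u v huv
  have h1 := primitive_add hφ u v
  have h2 : 0 ≤ ∫ t in u..v, φ t := integral_nonneg huv (fun t _ => h0 t)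
  simp only; linarith

lemma ae_hasDerivAt_primitive_nonneg {φ : ℝ → ℝ} (hm : Measurable φ)
    (hφ : Integrable φ) (h0 : ∀ t, 0 ≤ φ t) :
    ∀ᵐ x, HasDerivAt (fun y => ∫ t in (0:ℝ)..y, φ t) (φ x) x := by
  set H : ℝ → ℝ := fun y => ∫ t in (0:ℝ)..y, φ t with hH
  have hcont : Continuous H := intervalIntegral.continuous_primitive
    (fun a b => hφ.intervalIntegrable) 0
  let S : StieltjesFunction ℝ :=
    ⟨H, mono_primitive hφ h0, fun x => hcont.continuousWithinAt⟩
  have hmeas : S.measure = volume.withDensity (fun t => ENNReal.ofReal (φ t)) := by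
    refine Measure.ext_of_Ioc _ _ (fun a b hab => ?_)
    rw [S.measure_Ioc, withDensity_apply _ measurableSet_Ioc]
    have hsub : S b - S a = ∫ t in Ioc a b, φ t := by
      show H b - H a = _
      have h1 := primitive_add hφ a b
      have h2 : ∫ t in a..b, φ t = ∫ t in Ioc a b, φ t := integral_of_le hab.le
      simp only [hH, ← h1, ← h2]; ring
    rw [hsub, ofReal_integral_eq_lintegral_ofReal hφ.integrableOn
      (Filter.Eventually.of_forall h0)]
  have hrn : S.measure.rnDeriv volume =ᶠ[ae volume] (fun t => ENNReal.ofReal (φ t)) := by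
    rw [hmeas]
    exact Measure.rnDeriv_withDensity volume (by measurability)
  filter_upwards [S.ae_hasDerivAt, hrn] with x hx h'x
  rw [h'x, ENNReal.toReal_ofReal (h0 x)] at hx
  exact hx

lemma ae_hasDerivAt_primitive {φ : ℝ → ℝ} (hm : Measurable φ) (hφ : Integrable φ) :
    ∀ᵐ x, HasDerivAt (fun y => ∫ t in (0:ℝ)..y, φ t) (φ x) x := by
  have hp := ae_hasDerivAt_primitive_nonneg (hm.max measurable_const) hφ.pos_part
    (fun t => le_max_right _ _)
  have hn := ae_hasDerivAt_primitive_nonneg (hm.neg.max measurable_const) hφ.neg.pos_part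
    (fun t => le_max_right _ _)
  filter_upwards [hp, hn] with x hx h'x
  have h2 := hx.sub h'x
  have heq : (fun y => (∫ t in (0:ℝ)..y, φ t ⊔ 0) - ∫ t in (0:ℝ)..y, -φ t ⊔ 0)
      = fun y => ∫ t in (0:ℝ)..y, φ t := by
    funext y
    have B : IntervalIntegrable (fun t => -φ t ⊔ 0) volume 0 y := by
      simpa using (hφ.neg.pos_part.intervalIntegrable (a := 0) (b := y))
    rw [← intervalIntegral.integral_sub (hφ.pos_part.intervalIntegrable) B]
    congr 1; funext t; exact max_zero_sub_max_neg_zero_eq_self (φ t)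
  rw [show ((fun y => ∫ t in (0:ℝ)..y, φ t ⊔ 0) - fun y => ∫ t in (0:ℝ)..y, (-φ) t ⊔ 0) = fun y => ∫ t in (0:ℝ)..y, φ t from heq] at h2
  simpa [max_zero_sub_max_neg_zero_eq_self] using h2

lemma kernel_meas {a s x : ℝ} : ∀ u v : ℝ,
    AEStronglyMeasurable (fun t => (x - t) ^ (-a) * (t - s) ^ (a - 1))
      (volume.restrict (Ioc u v)) := by
  intro u v
  apply Measurable.aestronglyMeasurable
  fun_prop

lemma kernel_intervalIntegrable {a s x : ℝ} (ha : 0 < a) (ha1 : a < 1) (hsx : s < x) :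
    IntervalIntegrable (fun t => (x - t) ^ (-a) * (t - s) ^ (a - 1)) volume s x := by
  set m := (s + x) / 2 with hm
  have hsm : s < m := by rw [hm]; linarith
  have hmx : m < x := by rw [hm]; linarith
  have p1 : IntegrableOn (fun t => (x - t) ^ (-a) * (t - s) ^ (a - 1)) (Ioc s m) := by
    have base : IntegrableOn (fun t => (x - m) ^ (-a) * (t - s) ^ (a - 1)) (Ioc s m) := by
      have h1 : IntervalIntegrable (fun u : ℝ => u ^ (a - 1)) volume 0 (m - s) :=
        intervalIntegrable_rpow' (by linarith)
      have h2 := (h1.comp_sub_right s)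
      rw [zero_add] at h2
      have h3 : (m - s + s) = m := by ring
      rw [h3] at h2
      exact ((intervalIntegrable_iff_integrableOn_Ioc_of_le hsm.le).mp h2).const_mul _
    refine Integrable.mono' base (kernel_meas _ _) ?_
    filter_upwards [ae_restrict_mem measurableSet_Ioc] with t ht
    obtain ⟨ht1, ht2⟩ := ht
    have h1 : 0 < t - s := by linarith
    have h2 : 0 < x - t := by linarith
    rw [Real.norm_eq_abs, abs_mul, abs_of_nonneg (Real.rpow_nonneg h2.le _),
      abs_of_nonneg (Real.rpow_nonneg h1.le _)]
    have h4 : (x - t) ^ (-a) ≤ (x - m) ^ (-a) :=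
      Real.rpow_le_rpow_of_nonpos (by linarith) (by linarith) (by linarith)
    exact mul_le_mul_of_nonneg_right h4 (Real.rpow_nonneg h1.le _)
  have p2 : IntegrableOn (fun t => (x - t) ^ (-a) * (t - s) ^ (a - 1)) (Ioc m x) := by
    have base : IntegrableOn (fun t => (x - t) ^ (-a) * (m - s) ^ (a - 1)) (Ioc m x) := by
      have h1 : IntervalIntegrable (fun u : ℝ => u ^ (-a)) volume 0 (x - m) :=
        intervalIntegrable_rpow' (by linarith)
      have h3 : (x - (x - m)) = m := by ring
      have h2 : IntervalIntegrable (fun t : ℝ => (x - t) ^ (-a)) volume m x := by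
        have h4 := h1.comp_sub_left x
        rw [h3, sub_zero] at h4
        exact h4.symm
      exact ((intervalIntegrable_iff_integrableOn_Ioc_of_le hmx.le).mp h2).mul_const _
    refine Integrable.mono' base (kernel_meas _ _) ?_
    filter_upwards [ae_restrict_mem measurableSet_Ioc] with t ht
    obtain ⟨ht1, ht2⟩ := ht
    have h1 : 0 < t - s := by linarith
    have h2 : 0 ≤ x - t := by linarith
    rw [Real.norm_eq_abs, abs_mul, abs_of_nonneg (Real.rpow_nonneg h2 _),
      abs_of_nonneg (Real.rpow_nonneg h1.le _)]
    have h4 : (t - s) ^ (a - 1) ≤ (m - s) ^ (a - 1) :=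
      Real.rpow_le_rpow_of_nonpos (by linarith) (by linarith) (by linarith)
    exact mul_le_mul_of_nonneg_left h4 (Real.rpow_nonneg h2 _)
  rw [intervalIntegrable_iff_integrableOn_Ioc_of_le hsx.le, ← Ioc_union_Ioc_eq_Ioc hsm.le hmx.le]
  exact p1.union p2

noncomputable def Bco (a : ℝ) : ℝ := ∫ u in (0:ℝ)..1, (1 - u) ^ (-a) * u ^ (a - 1)

lemma Bco_pos {a : ℝ} (ha : 0 < a) (ha1 : a < 1) : 0 < Bco a := by
  apply intervalIntegral_pos_of_pos_on
  · have := kernel_intervalIntegrable (s := 0) (x := 1) ha ha1 one_pos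
    simpa using this
  · intro u hu
    exact mul_pos (Real.rpow_pos_of_pos (by linarith [hu.2]) _)
      (Real.rpow_pos_of_pos hu.1 _)
  · exact one_pos

lemma kernelInt {a s x : ℝ} (ha : 0 < a) (ha1 : a < 1) (hsx : s < x) :
    ∫ t in s..x, (x - t) ^ (-a) * (t - s) ^ (a - 1) = Bco a := by
  have hxs : 0 < x - s := by linarith
  have h0 := intervalIntegral.integral_comp_mul_add (a := 0) (b := 1)
    (f := fun t => (x - t) ^ (-a) * (t - s) ^ (a - 1)) hxs.ne' s
  have e0 : (x - s) * 0 + s = s := by ring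
  have e1 : (x - s) * 1 + s = x := by ring
  rw [e0, e1] at h0
  have key : EqOn (fun u => (x - ((x - s) * u + s)) ^ (-a) * (((x - s) * u + s) - s) ^ (a - 1))
      (fun u => (x - s)⁻¹ * ((1 - u) ^ (-a) * u ^ (a - 1))) (uIcc (0:ℝ) 1) := by
    intro u hu
    rw [uIcc_of_le zero_le_one] at hu
    simp only
    have e2 : x - ((x - s) * u + s) = (x - s) * (1 - u) := by ring
    have e3 : ((x - s) * u + s) - s = (x - s) * u := by ring
    rw [e2, e3, Real.mul_rpow hxs.le (by linarith [hu.2]), Real.mul_rpow hxs.le hu.1]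
    have e4 : (x - s) ^ (-a) * (x - s) ^ (a - 1) = (x - s)⁻¹ := by
      rw [← Real.rpow_add hxs]
      have e5 : -a + (a - 1) = -1 := by ring
      rw [e5, Real.rpow_neg_one]
    calc (x - s) ^ (-a) * (1 - u) ^ (-a) * ((x - s) ^ (a - 1) * u ^ (a - 1))
        = ((x - s) ^ (-a) * (x - s) ^ (a - 1)) * ((1 - u) ^ (-a) * u ^ (a - 1)) := by ring
      _ = (x - s)⁻¹ * ((1 - u) ^ (-a) * u ^ (a - 1)) := by rw [e4]
  rw [intervalIntegral.integral_congr key, intervalIntegral.integral_const_mul] at h0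
  have h2 : (x - s)⁻¹ * Bco a
      = (x - s)⁻¹ * ∫ t in s..x, (x - t) ^ (-a) * (t - s) ^ (a - 1) := by
    simpa [Bco, smul_eq_mul] using h0
  exact (mul_left_cancel₀ (inv_ne_zero hxs.ne') h2).symm

lemma fubini_key {a x : ℝ} (ha : 0 < a) (ha1 : a < 1) {ψ : ℝ → ℝ}
    (hm : Measurable ψ) (hψ : Integrable ψ) (hx : 0 < x) :
    ∫ t in (0:ℝ)..x, (x - t) ^ (-a) * ∫ s in (0:ℝ)..t, (t - s) ^ (a - 1) * ψ s
      = Bco a * ∫ s in (0:ℝ)..x, ψ s := by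
  set μT := volume.restrict (Ioc (0:ℝ) x) with hμT
  have hrw : μT = volume.restrict (Ioo (0:ℝ) x) :=
    Measure.restrict_congr_set Ioo_ae_eq_Ioc.symm
  have hae_Ioo : ∀ᵐ s ∂μT, s ∈ Ioo (0:ℝ) x := by
    rw [hrw]; exact ae_restrict_mem measurableSet_Ioo
  set F : ℝ × ℝ → ℝ :=
    fun p => if p.2 < p.1 then (x - p.1) ^ (-a) * ((p.1 - p.2) ^ (a - 1) * ψ p.2) else 0
    with hF
  have hFm : Measurable F := by
    apply Measurable.ite (measurableSet_lt measurable_snd measurable_fst) _ measurable_const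
    fun_prop
  -- section integrability and integrals for fixed s
  have hsec : ∀ s ∈ Ioo (0:ℝ) x, IntegrableOn (fun t => F (t, s)) (Ioc 0 x) volume := by
    intro s hs
    have hsplit : Ioc (0:ℝ) x = Ioc 0 s ∪ Ioc s x := (Ioc_union_Ioc_eq_Ioc hs.1.le hs.2.le).symm
    rw [hsplit]
    apply IntegrableOn.union
    · apply (integrableOn_zero (s := Ioc (0:ℝ) s)).congr_fun _ measurableSet_Ioc
      intro t ht
      simp only [hF]
      rw [if_neg (by simp; exact ht.2)]
    · have hk : IntegrableOn (fun t => (x - t) ^ (-a) * (t - s) ^ (a - 1) * ψ s) (Ioc s x)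
          volume := ((intervalIntegrable_iff_integrableOn_Ioc_of_le hs.2.le).mp
        (kernel_intervalIntegrable ha ha1 hs.2)).mul_const (ψ s)
      apply hk.congr_fun _ measurableSet_Ioc
      intro t ht
      simp only [hF]
      rw [if_pos ht.1]; ring
  have hval : ∀ s ∈ Ioo (0:ℝ) x, ∫ t in Ioc (0:ℝ) x, F (t, s) = Bco a * ψ s := by
    intro s hs
    have hsplit : Ioc (0:ℝ) x = Ioc 0 s ∪ Ioc s x := (Ioc_union_Ioc_eq_Ioc hs.1.le hs.2.le).symm
    have hk := (intervalIntegrable_iff_integrableOn_Ioc_of_le hs.2.le).mp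
        (kernel_intervalIntegrable ha ha1 hs.2)
    rw [hsplit, setIntegral_union (Ioc_disjoint_Ioc_of_le le_rfl) measurableSet_Ioc
      (((hsec s hs).mono_set (by rw [hsplit]; exact subset_union_left)))
      (((hsec s hs).mono_set (by rw [hsplit]; exact subset_union_right)))]
    have h1 : ∫ t in Ioc (0:ℝ) s, F (t, s) = 0 := by
      apply setIntegral_eq_zero_of_forall_eq_zero
      intro t ht
      simp only [hF]
      rw [if_neg (by simp; exact ht.2)]
    have h2 : ∫ t in Ioc s x, F (t, s) = Bco a * ψ s := by
      have : ∫ t in Ioc s x, F (t, s) = ∫ t in Ioc s x, ((x - t) ^ (-a) * (t - s) ^ (a - 1)) * ψ s := by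
        apply setIntegral_congr_fun measurableSet_Ioc
        intro t ht
        simp only [hF]
        rw [if_pos ht.1]; ring
      rw [this, MeasureTheory.integral_mul_const, ← intervalIntegral.integral_of_le hs.2.le,
        kernelInt ha ha1 hs.2]
    rw [h1, h2, zero_add]
  have hnorm : ∀ s ∈ Ioo (0:ℝ) x, ∫ t in Ioc (0:ℝ) x, ‖F (t, s)‖ = Bco a * ‖ψ s‖ := by
    intro s hs
    have hsplit : Ioc (0:ℝ) x = Ioc 0 s ∪ Ioc s x := (Ioc_union_Ioc_eq_Ioc hs.1.le hs.2.le).symm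
    rw [hsplit, setIntegral_union (Ioc_disjoint_Ioc_of_le le_rfl) measurableSet_Ioc
      ((((hsec s hs).mono_set (by rw [hsplit]; exact subset_union_left))).norm)
      ((((hsec s hs).mono_set (by rw [hsplit]; exact subset_union_right))).norm)]
    have h1 : ∫ t in Ioc (0:ℝ) s, ‖F (t, s)‖ = 0 := by
      apply setIntegral_eq_zero_of_forall_eq_zero
      intro t ht
      simp only [hF]
      rw [if_neg (by simp; exact ht.2)]
      simp
    have h2 : ∫ t in Ioc s x, ‖F (t, s)‖ = Bco a * ‖ψ s‖ := by
      have he : ∫ t in Ioc s x, ‖F (t, s)‖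
          = ∫ t in Ioc s x, ((x - t) ^ (-a) * (t - s) ^ (a - 1)) * ‖ψ s‖ := by
        apply setIntegral_congr_fun measurableSet_Ioc
        intro t ht
        simp only [hF]
        rw [if_pos ht.1, norm_mul, norm_mul, Real.norm_eq_abs, Real.norm_eq_abs,
          abs_of_nonneg (Real.rpow_nonneg (by linarith [ht.2]) (-a)),
          abs_of_nonneg (Real.rpow_nonneg (by linarith [ht.1]) (a - 1))]
        ring
      rw [he, MeasureTheory.integral_mul_const, ← intervalIntegral.integral_of_le hs.2.le,
        kernelInt ha ha1 hs.2]
    rw [h1, h2, zero_add]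
  -- integrability on the product
  have hFint : Integrable F (μT.prod μT) := by
    rw [MeasureTheory.integrable_prod_iff' (hFm.aestronglyMeasurable)]
    constructor
    · filter_upwards [hae_Ioo] with s hs
      exact hsec s hs
    · apply Integrable.congr ((hψ.restrict.norm).const_mul (Bco a))
      filter_upwards [hae_Ioo] with s hs
      exact (hnorm s hs).symm
  have hswap := MeasureTheory.integral_integral_swap (f := fun t s => F (t, s)) hFint
  -- right-hand side
  have hRHS : ∫ s, (∫ t, F (t, s) ∂μT) ∂μT = Bco a * ∫ s in (0:ℝ)..x, ψ s := by
    have h1 : ∫ s, (∫ t, F (t, s) ∂μT) ∂μT = ∫ s, Bco a * ψ s ∂μT := by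
      apply MeasureTheory.integral_congr_ae
      filter_upwards [hae_Ioo] with s hs
      exact hval s hs
    rw [h1, MeasureTheory.integral_const_mul, intervalIntegral.integral_of_le hx.le]
  -- left-hand side
  have hsecT : ∀ᵐ t ∂μT, Integrable (fun s => F (t, s)) μT :=
    ((MeasureTheory.integrable_prod_iff (hFm.aestronglyMeasurable)).mp hFint).1
  have hLHS : ∫ t in (0:ℝ)..x, (x - t) ^ (-a) * ∫ s in (0:ℝ)..t, (t - s) ^ (a - 1) * ψ s
      = ∫ t, (∫ s, F (t, s) ∂μT) ∂μT := by
    rw [intervalIntegral.integral_of_le hx.le]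
    apply MeasureTheory.integral_congr_ae
    filter_upwards [hae_Ioo, hsecT] with t ht hint
    have hint' : IntegrableOn (fun s => F (t, s)) (Ioc (0:ℝ) x) volume := hint
    have hsplit : Ioc (0:ℝ) x = Ioc 0 t ∪ Ioc t x := (Ioc_union_Ioc_eq_Ioc ht.1.le ht.2.le).symm
    have e2 : ∫ s, F (t, s) ∂μT = (∫ s in Ioc (0:ℝ) t, F (t, s)) + ∫ s in Ioc t x, F (t, s) := by
      show ∫ s in Ioc (0:ℝ) x, F (t, s) = _
      rw [hsplit]
      exact setIntegral_union (Ioc_disjoint_Ioc_of_le le_rfl) measurableSet_Ioc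
        ((hint'.mono_set (by rw [hsplit]; exact subset_union_left)))
        ((hint'.mono_set (by rw [hsplit]; exact subset_union_right)))
    have e3 : ∫ s in Ioc t x, F (t, s) = 0 := by
      apply setIntegral_eq_zero_of_forall_eq_zero
      intro s hs
      simp only [hF]
      rw [if_neg (by simp; exact hs.1.le)]
    have e4 : ∫ s in Ioc (0:ℝ) t, F (t, s)
        = ∫ s in Ioc (0:ℝ) t, (x - t) ^ (-a) * ((t - s) ^ (a - 1) * ψ s) := by
      apply setIntegral_congr_fun measurableSet_Ioc
      intro s hs
      simp only [hF]
      rcases lt_or_eq_of_le hs.2 with h | h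
      · rw [if_pos h]
      · rw [if_neg (by simp [h]), h, sub_self, Real.zero_rpow (by linarith), zero_mul, mul_zero]
    rw [e2, e3, e4, add_zero, MeasureTheory.integral_const_mul, intervalIntegral.integral_of_le ht.1.le]
  rw [hLHS, hswap, hRHS]

lemma eq_on_of_ae_eq_const {P : ℝ → ℝ} (hP : Continuous P) {d : ℝ}
    (h : ∀ᵐ y ∂(volume.restrict (Ioc (0:ℝ) 1)), P y = d) :
    ∀ y ∈ Ioc (0:ℝ) 1, P y = d := by
  intro y hy
  have hcl : IsClosed {z : ℝ | P z = d} := isClosed_eq hP continuous_const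
  have hnull : volume (Ioc (0:ℝ) 1 ∩ {z | ¬ P z = d}) = 0 := by
    have h2 := (ae_restrict_iff' measurableSet_Ioc).mp h
    rw [ae_iff] at h2
    have : {a : ℝ | ¬(a ∈ Ioc (0:ℝ) 1 → P a = d)} = Ioc (0:ℝ) 1 ∩ {z | ¬ P z = d} := by
      ext z; simp [_root_.not_imp, and_assoc]
    rwa [this] at h2
  have hyc : y ∈ closure (Ioc (0:ℝ) 1 ∩ {z | P z = d}) := by
    rw [_root_.mem_closure_iff]
    intro o ho hyo
    obtain ⟨ε, hε, hball⟩ := Metric.isOpen_iff.mp ho y hyo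
    set l := max (y - ε) 0 with hl
    have hly : l < y := max_lt (by linarith) hy.1
    have hsub1 : Ioo l y ⊆ Ioc (0:ℝ) 1 := fun z hz =>
      ⟨lt_of_le_of_lt (le_max_right _ _) hz.1, le_trans hz.2.le hy.2⟩
    have hsub2 : Ioo l y ⊆ o := by
      intro z hz
      apply hball
      rw [Metric.mem_ball, Real.dist_eq, abs_sub_lt_iff]
      constructor
      · linarith [hz.2]
      · have : y - ε ≤ l := le_max_left _ _
        linarith [hz.1]
    by_contra hemp
    have hcov : Ioo l y ⊆ Ioc (0:ℝ) 1 ∩ {z | ¬ P z = d} := by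
      intro z hz
      refine ⟨hsub1 hz, fun hzd => hemp ⟨z, hsub2 hz, hsub1 hz, hzd⟩⟩
    have hle : volume (Ioo l y) ≤ volume (Ioc (0:ℝ) 1 ∩ {z | ¬ P z = d}) := measure_mono hcov
    rw [hnull] at hle
    have hpos : 0 < volume (Ioo l y) := by
      rw [Real.volume_Ioo]
      exact ENNReal.ofReal_pos.mpr (by linarith)
    exact absurd (le_antisymm hle zero_le) (ne_of_gt hpos)
  exact closure_minimal inter_subset_right hcl hyc

end AuxHilfer

/-- The kernel of the Hilfer fractional derivative on
`X¹_H = {f : I^(1-α-γ₁) f ∈ AC([0,1])}` is `{c · x^(α+γ₁-1)}`. -/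
theorem hilfer_kernel (α γ₁ : ℝ) (hα0 : 0 < α) (hα1 : α ≤ 1)
    (hγ0 : 0 ≤ γ₁) (hγ1 : γ₁ ≤ 1 - α)
    (f : ℝ → ℝ) (hf : L1 f) (hdom : IsAC (RL (1 - α - γ₁) f)) :
    (∀ᵐ x ∂(volume.restrict (Set.Ioc (0:ℝ) 1)),
        RL γ₁ (deriv (RL (1 - α - γ₁) f)) x = 0) ↔
      ∃ c : ℝ, ∀ᵐ x ∂(volume.restrict (Set.Ioc (0:ℝ) 1)),
        f x = c * x ^ (α + γ₁ - 1) := by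
  have hβ1 : (1:ℝ) - α - γ₁ < 1 := by linarith
  have hβ0 : (0:ℝ) ≤ 1 - α - γ₁ := by linarith
  have hγ1' : γ₁ < 1 := by linarith
  obtain ⟨c₀, ψ, hψint, hgval⟩ := hdom
  have hψ₀int : Integrable ((Ioc (0:ℝ) 1).indicator ψ) :=
    (integrable_indicator_iff measurableSet_Ioc).mpr hψint
  obtain ⟨φψ, hφψm, hφψae⟩ : ∃ φ, Measurable φ ∧ (Ioc (0:ℝ) 1).indicator ψ =ᵐ[volume] φ := by
    obtain ⟨φ, hm, hae⟩ := hψ₀int.aestronglyMeasurable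
    exact ⟨φ, hm.measurable, hae⟩
  have hφψint : Integrable φψ := hψ₀int.congr hφψae
  have hf₀int : Integrable ((Ioc (0:ℝ) 1).indicator f) :=
    (integrable_indicator_iff measurableSet_Ioc).mpr hf
  obtain ⟨φf, hφfm, hφfae⟩ : ∃ φ, Measurable φ ∧ (Ioc (0:ℝ) 1).indicator f =ᵐ[volume] φ := by
    obtain ⟨φ, hm, hae⟩ := hf₀int.aestronglyMeasurable
    exact ⟨φ, hm.measurable, hae⟩
  have hφfint : Integrable φf := hf₀int.congr hφfae
  have haeIoo : ∀ u : ℝ, ∀ᵐ t ∂volume.restrict (Ioc (0:ℝ) u), t ∈ Ioo (0:ℝ) u := by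
    intro u
    rw [← Measure.restrict_congr_set Ioo_ae_eq_Ioc]
    exact ae_restrict_mem measurableSet_Ioo
  have hRL0 : ∀ a : ℝ, a = 0 → ∀ g : ℝ → ℝ, RL a g = g := by
    intro a ha g; simp [RL, ha]
  have hRLpos : ∀ a : ℝ, a ≠ 0 → ∀ (g : ℝ → ℝ) (x : ℝ),
      RL a g x = (1 / Real.Gamma a) * ∫ t in (0:ℝ)..x, (x - t) ^ (a - 1) * g t := by
    intro a ha g x; simp [RL, if_neg ha]
  have hψeq : ∀ y ∈ Icc (0:ℝ) 1, (∫ t in (0:ℝ)..y, ψ t) = ∫ t in (0:ℝ)..y, φψ t := by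
    intro y hy
    rw [intervalIntegral.integral_of_le hy.1, intervalIntegral.integral_of_le hy.1]
    apply MeasureTheory.integral_congr_ae
    filter_upwards [ae_restrict_mem measurableSet_Ioc, ae_restrict_of_ae hφψae] with t ht h1
    have htm : t ∈ Ioc (0:ℝ) 1 := ⟨ht.1, le_trans ht.2 hy.2⟩
    rw [← h1, Set.indicator_of_mem htm ψ]
  have hfeq : ∀ y ∈ Ioc (0:ℝ) 1, ∀ k : ℝ → ℝ,
      (∫ t in (0:ℝ)..y, k t * f t) = ∫ t in (0:ℝ)..y, k t * φf t := by
    intro y hy k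
    rw [intervalIntegral.integral_of_le hy.1.le, intervalIntegral.integral_of_le hy.1.le]
    apply MeasureTheory.integral_congr_ae
    filter_upwards [ae_restrict_mem measurableSet_Ioc, ae_restrict_of_ae hφfae] with t ht h1
    have htm : t ∈ Ioc (0:ℝ) 1 := ⟨ht.1, le_trans ht.2 hy.2⟩
    rw [← h1, Set.indicator_of_mem htm f]
  have hg2 : ∀ y ∈ Ioc (0:ℝ) 1, RL (1 - α - γ₁) f y = c₀ + ∫ t in (0:ℝ)..y, φψ t := by
    intro y hy
    rw [hgval y hy, hψeq y ⟨hy.1.le, hy.2⟩]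
  have hDg : ∀ᵐ y, y ∈ Ioo (0:ℝ) 1 → deriv (RL (1 - α - γ₁) f) y = φψ y := by
    filter_upwards [ae_hasDerivAt_primitive hφψm hφψint] with y hy hyo
    have hEv : RL (1 - α - γ₁) f =ᶠ[nhds y] (fun z => c₀ + ∫ t in (0:ℝ)..z, φψ t) := by
      filter_upwards [Ioo_mem_nhds hyo.1 hyo.2] with z hz
      exact hg2 z ⟨hz.1, hz.2.le⟩
    rw [hEv.deriv_eq]
    exact (hy.const_add c₀).deriv
  constructor
  · intro h
    have hzero : ∀ x ∈ Ioc (0:ℝ) 1, (∫ t in (0:ℝ)..x, φψ t) = 0 := by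
      by_cases hγ : γ₁ = 0
      · have h' : ∀ᵐ t ∂volume.restrict (Ioc (0:ℝ) 1), φψ t = 0 := by
          filter_upwards [h, haeIoo 1, ae_restrict_of_ae hDg] with t h1 h2 h3
          rw [← h3 h2]
          rwa [hRL0 γ₁ hγ] at h1
        intro x hx
        rw [intervalIntegral.integral_of_le hx.1.le,
          MeasureTheory.integral_congr_ae (g := fun _ => (0:ℝ))
            (ae_restrict_of_ae_restrict_of_subset (Ioc_subset_Ioc_right hx.2) h')]
        simp
      · have hγpos : 0 < γ₁ := lt_of_le_of_ne hγ0 (Ne.symm hγ)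
        have hΓ : Real.Gamma γ₁ ≠ 0 := (Real.Gamma_pos_of_pos hγpos).ne'
        have hinner : ∀ᵐ t ∂volume.restrict (Ioc (0:ℝ) 1),
            (∫ s in (0:ℝ)..t, (t - s) ^ (γ₁ - 1) * φψ s) = 0 := by
          filter_upwards [h, ae_restrict_mem measurableSet_Ioc] with t h1 ht
          have hcongr : (∫ s in (0:ℝ)..t, (t - s) ^ (γ₁ - 1) * deriv (RL (1 - α - γ₁) f) s)
              = ∫ s in (0:ℝ)..t, (t - s) ^ (γ₁ - 1) * φψ s := by
            rw [intervalIntegral.integral_of_le ht.1.le, intervalIntegral.integral_of_le ht.1.le]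
            apply MeasureTheory.integral_congr_ae
            filter_upwards [haeIoo t, ae_restrict_of_ae hDg] with s hs h2
            rw [h2 ⟨hs.1, lt_of_lt_of_le hs.2 ht.2⟩]
          rw [hRLpos γ₁ hγ] at h1
          rw [← hcongr]
          rcases mul_eq_zero.mp h1 with h4 | h4
          · exact absurd h4 (by positivity)
          · exact h4
        intro x hx
        have hk := fubini_key hγpos hγ1' hφψm hφψint hx.1
        have hL : (∫ t in (0:ℝ)..x, (x - t) ^ (-γ₁) * ∫ s in (0:ℝ)..t, (t - s) ^ (γ₁ - 1) * φψ s) = 0 := by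
          rw [intervalIntegral.integral_of_le hx.1.le,
            MeasureTheory.integral_congr_ae (g := fun _ => (0:ℝ)) ?_]
          · simp
          · filter_upwards [ae_restrict_of_ae_restrict_of_subset (Ioc_subset_Ioc_right hx.2) hinner]
              with t h5
            rw [h5, mul_zero]
        rw [hL] at hk
        rcases mul_eq_zero.mp hk.symm with h4 | h4
        · exact absurd h4 (Bco_pos hγpos hγ1').ne'
        · exact h4
    have hgc : ∀ x ∈ Ioc (0:ℝ) 1, RL (1 - α - γ₁) f x = c₀ := by
      intro x hx
      rw [hg2 x hx, hzero x hx, add_zero]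
    by_cases hβz : (1:ℝ) - α - γ₁ = 0
    · refine ⟨c₀, ?_⟩
      have hfc : ∀ x ∈ Ioc (0:ℝ) 1, f x = c₀ := by
        intro x hx
        have h5 := hgc x hx
        rwa [hβz, hRL0 0 rfl] at h5
      filter_upwards [ae_restrict_mem measurableSet_Ioc] with x hx
      rw [hfc x hx, show α + γ₁ - 1 = 0 by linarith, Real.rpow_zero, mul_one]
    · have hβpos : 0 < 1 - α - γ₁ := lt_of_le_of_ne hβ0 (Ne.symm hβz)
      have hΓβ : (0:ℝ) < Real.Gamma (1 - α - γ₁) := Real.Gamma_pos_of_pos hβpos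
      -- inner integrals are constant
      have hGf : ∀ t ∈ Ioc (0:ℝ) 1,
          (∫ s in (0:ℝ)..t, (t - s) ^ (1 - α - γ₁ - 1) * φf s)
            = Real.Gamma (1 - α - γ₁) * c₀ := by
        intro t ht
        have h5 := hgc t ht
        rw [hRLpos _ hβz] at h5
        rw [hfeq t ht (fun s => (t - s) ^ (1 - α - γ₁ - 1))] at h5
        field_simp at h5
        linear_combination h5
      -- apply fubini
      set K : ℝ := Real.Gamma (1 - α - γ₁) * c₀ / ((1 - (1 - α - γ₁)) * Bco (1 - α - γ₁)) with hK
      have hKx : ∀ x ∈ Ioc (0:ℝ) 1, (∫ t in (0:ℝ)..x, φf t) = K * x ^ (1 - (1 - α - γ₁)) := by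
        intro x hx
        have hk := fubini_key hβpos hβ1 hφfm hφfint hx.1
        have hL : (∫ t in (0:ℝ)..x, (x - t) ^ (-(1 - α - γ₁))
              * ∫ s in (0:ℝ)..t, (t - s) ^ (1 - α - γ₁ - 1) * φf s)
            = Real.Gamma (1 - α - γ₁) * c₀ * (x ^ (1 - (1 - α - γ₁)) / (1 - (1 - α - γ₁))) := by
          have h6 : (∫ t in (0:ℝ)..x, (x - t) ^ (-(1 - α - γ₁))
              * ∫ s in (0:ℝ)..t, (t - s) ^ (1 - α - γ₁ - 1) * φf s)
              = ∫ t in (0:ℝ)..x, (x - t) ^ (-(1 - α - γ₁)) * (Real.Gamma (1 - α - γ₁) * c₀) := by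
            rw [intervalIntegral.integral_of_le hx.1.le, intervalIntegral.integral_of_le hx.1.le]
            apply MeasureTheory.integral_congr_ae
            filter_upwards [ae_restrict_mem measurableSet_Ioc] with t ht
            rw [hGf t ⟨ht.1, le_trans ht.2 hx.2⟩]
          rw [h6, intervalIntegral.integral_mul_const]
          have h7 : (∫ t in (0:ℝ)..x, (x - t) ^ (-(1 - α - γ₁)))
              = x ^ (1 - (1 - α - γ₁)) / (1 - (1 - α - γ₁)) := by
            rw [show (fun t : ℝ => (x - t) ^ (-(1 - α - γ₁)))
                = (fun t : ℝ => ((fun u : ℝ => u ^ (-(1 - α - γ₁))) (x - t))) from rfl,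
              intervalIntegral.integral_comp_sub_left (fun u : ℝ => u ^ (-(1 - α - γ₁))) x,
              sub_zero, sub_self, integral_rpow (Or.inl (by linarith))]
            rw [Real.zero_rpow (by linarith)]
            ring_nf
          rw [h7]
          ring
        rw [hL] at hk
        have hBne : Bco (1 - α - γ₁) ≠ 0 := (Bco_pos hβpos hβ1).ne'
        have hpne : (1:ℝ) - (1 - α - γ₁) ≠ 0 := by linarith
        have h9 : Bco (1 - α - γ₁) * (K * x ^ (1 - (1 - α - γ₁)))
            = Real.Gamma (1 - α - γ₁) * c₀
              * (x ^ (1 - (1 - α - γ₁)) / (1 - (1 - α - γ₁))) := by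
          rw [hK]; field_simp
        exact mul_left_cancel₀ hBne (hk.symm.trans h9.symm)
      refine ⟨K * (1 - (1 - α - γ₁)), ?_⟩
      have hmain : ∀ᵐ y, y ∈ Ioo (0:ℝ) 1 →
          φf y = K * (1 - (1 - α - γ₁)) * y ^ (α + γ₁ - 1) := by
        filter_upwards [ae_hasDerivAt_primitive hφfm hφfint] with y hy hyo
        have hEv : (fun z => ∫ t in (0:ℝ)..z, φf t)
            =ᶠ[nhds y] (fun z => K * z ^ (1 - (1 - α - γ₁))) := by
          filter_upwards [Ioo_mem_nhds hyo.1 hyo.2] with z hz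
          exact hKx z ⟨hz.1, hz.2.le⟩
        have h2 : HasDerivAt (fun z => K * z ^ (1 - (1 - α - γ₁))) (φf y) y :=
          hy.congr_of_eventuallyEq hEv.symm
        have h3 : HasDerivAt (fun z => K * z ^ (1 - (1 - α - γ₁)))
            (K * ((1 - (1 - α - γ₁)) * y ^ (1 - (1 - α - γ₁) - 1))) y :=
          (Real.hasDerivAt_rpow_const (Or.inl hyo.1.ne')).const_mul K
        rw [h2.unique h3, show 1 - (1 - α - γ₁) - 1 = α + γ₁ - 1 by ring]
        ring
      filter_upwards [haeIoo 1, ae_restrict_of_ae hmain, ae_restrict_of_ae hφfae,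
        ae_restrict_mem measurableSet_Ioc] with x h1 h2 h3 h4
      rw [← h2 h1, ← h3, indicator_of_mem h4]
  · rintro ⟨c, hc⟩
    -- g is constant on Ioc 0 1
    obtain ⟨C, hgc⟩ : ∃ C, ∀ x ∈ Ioc (0:ℝ) 1, RL (1 - α - γ₁) f x = C := by
      by_cases hβz : (1:ℝ) - α - γ₁ = 0
      · refine ⟨c, ?_⟩
        have hcont : Continuous (fun y => ∫ t in (0:ℝ)..y, φψ t) :=
          intervalIntegral.continuous_primitive (fun a b => hφψint.intervalIntegrable) 0
        have hP : ∀ᵐ y ∂(volume.restrict (Ioc (0:ℝ) 1)),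
            (fun y => ∫ t in (0:ℝ)..y, φψ t) y = c - c₀ := by
          filter_upwards [hc, ae_restrict_mem measurableSet_Ioc] with y h1 h2
          have h5 : RL (1 - α - γ₁) f y = f y := by rw [hβz, hRL0 0 rfl]
          have h6 := hg2 y h2
          rw [h5, h1, show α + γ₁ - 1 = 0 by linarith, Real.rpow_zero, mul_one] at h6
          linarith
        have hPc := eq_on_of_ae_eq_const hcont hP
        intro x hx
        rw [hg2 x hx, hPc x hx]
        ring
      · have hβpos : 0 < 1 - α - γ₁ := lt_of_le_of_ne hβ0 (Ne.symm hβz)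
        refine ⟨(1 / Real.Gamma (1 - α - γ₁)) * (c * Bco (1 - (1 - α - γ₁))), ?_⟩
        intro x hx
        have hint : (∫ t in (0:ℝ)..x, (x - t) ^ (1 - α - γ₁ - 1) * f t)
            = c * Bco (1 - (1 - α - γ₁)) := by
          have h6 : (∫ t in (0:ℝ)..x, (x - t) ^ (1 - α - γ₁ - 1) * f t)
              = ∫ t in (0:ℝ)..x, c * ((x - t) ^ (-(1 - (1 - α - γ₁))) * t ^ (1 - (1 - α - γ₁) - 1)) := by
            rw [intervalIntegral.integral_of_le hx.1.le, intervalIntegral.integral_of_le hx.1.le]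
            apply MeasureTheory.integral_congr_ae
            filter_upwards [ae_restrict_of_ae_restrict_of_subset (Ioc_subset_Ioc_right hx.2) hc,
              ae_restrict_mem measurableSet_Ioc] with t h1 h2
            rw [h1, show α + γ₁ - 1 = 1 - (1 - α - γ₁) - 1 by ring,
              show (1:ℝ) - α - γ₁ - 1 = -(1 - (1 - α - γ₁)) by ring]
            ring
          rw [h6, intervalIntegral.integral_const_mul]
          have h7 := kernelInt (a := 1 - (1 - α - γ₁)) (s := 0) (x := x)
            (by linarith) (by linarith) hx.1
          simp only [sub_zero] at h7
          rw [h7]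
        rw [hRLpos _ hβz, hint]
    have hderiv0 : ∀ y ∈ Ioo (0:ℝ) 1, deriv (RL (1 - α - γ₁) f) y = 0 := by
      intro y hy
      have hEv : RL (1 - α - γ₁) f =ᶠ[nhds y] (fun _ => C) := by
        filter_upwards [Ioo_mem_nhds hy.1 hy.2] with z hz
        exact hgc z ⟨hz.1, hz.2.le⟩
      rw [hEv.deriv_eq, deriv_const]
    by_cases hγ : γ₁ = 0
    · filter_upwards [haeIoo 1] with x hx
      rw [hRL0 γ₁ hγ]
      exact hderiv0 x hx
    · filter_upwards [ae_restrict_mem measurableSet_Ioc] with x hx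
      rw [hRLpos γ₁ hγ]
      have h5 : (∫ t in (0:ℝ)..x, (x - t) ^ (γ₁ - 1) * deriv (RL (1 - α - γ₁) f) t) = 0 := by
        rw [intervalIntegral.integral_of_le hx.1.le,
          MeasureTheory.integral_congr_ae (g := fun _ => (0:ℝ)) ?_]
        · simp
        · filter_upwards [haeIoo x] with t ht
          rw [hderiv0 t ⟨ht.1, lt_of_lt_of_le ht.2 hx.2⟩, mul_zero]
      rw [h5, mul_zero]
end
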